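/- Let A be a Wheeler DFA with states u_1 < ... < u_n in Wheeler order, and let δ̂ denote the extension of δ to strings. For any string α ∈ Σ*, if δ̂(u_i, α) and δ̂(u_{i+1}, α) are both defined and distinct, then they are adjacent in the Wheeler order, and δ̂(u_i, α) < δ̂(u_{i+1}, α). -/
import Mathlib


/-- A Wheeler DFA over a linearly ordered state set `Q` (the Wheeler order)
and a linearly ordered alphabet `A`.  The transition function is partial
(`Option`-valued).  The three Wheeler axioms are part of the structure. -/
structure WDFA (Q A : Type) [LinearOrder Q] [LinearOrder A] where
  delta : Q → A → Option Q
  start : Q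
  F : Set Q
  /-- Wheeler axiom (i): the initial state is minimum. -/
  start_le : ∀ u, start ≤ u
  /-- Wheeler axiom (ii). -/
  w2 : ∀ {u v : Q} {a b : A} {u' v' : Q},
      delta u a = some u' → delta v b = some v' → a < b → u' < v'
  /-- Wheeler axiom (iii). -/
  w3 : ∀ {u v : Q} {a : A} {u' v' : Q},
      delta u a = some u' → delta v a = some v' → u < v → u' ≤ v'

namespace WDFA

variable {Q A : Type} [LinearOrder Q] [LinearOrder A]

/-- Extension of the (partial) transition function to strings. -/
def dhat (M : WDFA Q A) : Q → List A → Option Q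
  | q, [] => some q
  | q, a :: w => (M.delta q a).bind (fun p => M.dhat p w)

/-- `q` accepts the string `w`. -/
def Acc (M : WDFA Q A) (q : Q) (w : List A) : Prop :=
  ∃ p, M.dhat q w = some p ∧ p ∈ M.F

/-- Set of labels of outgoing edges of `q`. -/
def out (M : WDFA Q A) (q : Q) : Set A := {a | (M.delta q a).isSome}

/-- Myhill–Nerode state equivalence (with equal domains of definition). -/
def MN (M : WDFA Q A) (u v : Q) : Prop :=
  ∀ w : List A, (M.dhat u w).isSome = (M.dhat v w).isSome ∧ (M.Acc u w ↔ M.Acc v w)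

/-- Myhill–Nerode state equivalence, acceptance-only version
(undefined counts as rejecting). -/
def MNacc (M : WDFA Q A) (u v : Q) : Prop :=
  ∀ w : List A, M.Acc u w ↔ M.Acc v w

/-- `u` and `v` are adjacent in the Wheeler order. -/
def Adj (M : WDFA Q A) (u v : Q) : Prop :=
  u < v ∧ ∀ w : Q, ¬ (u < w ∧ w < v)

/-- `lam` is the incoming-label map: `lam start = ⊥` (the special symbol `#`)
and every transition entering `v` is labelled `lam v`. -/
def HasLam (M : WDFA Q A) (lam : Q → WithBot A) : Prop :=
  lam M.start = ⊥ ∧ ∀ u a v, M.delta u a = some v → lam v = (a : WithBot A)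

/-- Every non-initial state has an incoming transition (reachability). -/
def Reach1 (M : WDFA Q A) : Prop :=
  ∀ u, u ≠ M.start → ∃ p a, M.delta p a = some u

/-- Every state accepts some string (is final or reaches a final state). -/
def Coacc (M : WDFA Q A) : Prop := ∀ u, ∃ w, M.Acc u w

/-- The minimum-WDFA equivalence `≡`: `u` and `v` have the same incoming
label, are Myhill–Nerode equivalent, and so is every state between them in
the Wheeler order. -/
def Equ (M : WDFA Q A) (lam : Q → WithBot A) (u v : Q) : Prop :=
  lam u = lam v ∧ M.MN u v ∧
    ∀ w, min u v ≤ w → w ≤ max u v → lam w = lam u ∧ M.MN w u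

/-- `(u,v)` is a node of the border graph: adjacent states with equal
incoming labels. -/
def IsBorder (M : WDFA Q A) (lam : Q → WithBot A) (u v : Q) : Prop :=
  M.Adj u v ∧ lam u = lam v

/-- Edge relation of the border graph `B(A)`: there is an edge from the
border `x` to the border `y` whenever `x.1 = δ(y.1, λ(x.1))` and
`x.2 = δ(y.2, λ(x.1))`. -/
def EdgeZ (M : WDFA Q A) (lam : Q → WithBot A) : Q × Q → Q × Q → Prop :=
  fun x y => M.IsBorder lam x.1 x.2 ∧ M.IsBorder lam y.1 y.2 ∧
    ∃ a : A, lam x.1 = (a : WithBot A) ∧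
      M.delta y.1 a = some x.1 ∧ M.delta y.2 a = some x.2

/-- Transition function of the quotient automaton `A/st`
(`δ([u],a) = [δ(u,a)]`, implemented via representatives). -/
noncomputable def qdelta (M : WDFA Q A) (st : Setoid Q) (c : Quotient st) (a : A) :
    Option (Quotient st) :=
  (M.delta (Quotient.out c) a).map (Quotient.mk st)

/-- String extension of the quotient transition function. -/
noncomputable def qdhat (M : WDFA Q A) (st : Setoid Q) : Quotient st → List A → Option (Quotient st)
  | c, [] => some c
  | c, a :: w => (M.qdelta st c a).bind (fun d => M.qdhat st d w)

/-- The quotient automaton accepts `w`. -/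
def qAcc (M : WDFA Q A) (st : Setoid Q) (w : List A) : Prop :=
  ∃ c, M.qdhat st (Quotient.mk st M.start) w = some c ∧
    ∃ u ∈ M.F, Quotient.mk st u = c

/-- Order induced on `≡`-classes by the Wheeler order (classes are
intervals, so comparing arbitrary representatives is well defined). -/
def qle (st : Setoid Q) (c d : Quotient st) : Prop :=
  c = d ∨ ∀ u v : Q, Quotient.mk st u = c → Quotient.mk st v = d → u < v

end WDFA

theorem wdfa_adjacent_step {Q A : Type} [LinearOrder Q] [LinearOrder A]
    (M : WDFA Q A) (hreach : M.Reach1)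
    (u u' : Q) (hadj : M.Adj u u') (a : A) (v v' : Q)
    (h1 : M.delta u a = some v) (h2 : M.delta u' a = some v')
    (hne : v ≠ v') : v < v' ∧ M.Adj v v' := by
  have hlt : v < v' := lt_of_le_of_ne (M.w3 h1 h2 hadj.1) hne
  refine ⟨hlt, hlt, ?_⟩
  rintro w ⟨hw1, hw2⟩
  have hwstart : w ≠ M.start := by
    intro h
    exact absurd hw1 (not_lt.mpr (h ▸ M.start_le v))
  obtain ⟨p, b, hp⟩ := hreach w hwstart
  rcases lt_trichotomy b a with hb | hb | hb
  · exact absurd (M.w2 hp h1 hb) (not_lt.mpr hw1.le)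
  · subst hb
    rcases lt_trichotomy p u with h | h | h
    · exact absurd hw1 (not_lt.mpr (M.w3 hp h1 h))
    · subst h
      rw [hp] at h1
      exact absurd hw1 (by rw [Option.some.inj h1]; exact lt_irrefl _)
    · rcases lt_trichotomy p u' with h' | h' | h'
      · exact hadj.2 p ⟨h, h'⟩
      · subst h'
        rw [hp] at h2
        exact absurd hw2 (by rw [Option.some.inj h2]; exact lt_irrefl _)
      · exact absurd hw2 (not_lt.mpr (M.w3 h2 hp h'))
  · exact absurd (M.w2 h2 hp hb) (not_lt.mpr hw2.le)

/-- images under any string `α` of two Wheeler-adjacent states,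
if both defined and distinct, are Wheeler-adjacent (and ordered). -/
theorem wdfa_adjacent_string {Q A : Type} [LinearOrder Q] [LinearOrder A]
    (M : WDFA Q A) (hreach : M.Reach1)
    (u u' : Q) (hadj : M.Adj u u') (α : List A) (v v' : Q)
    (h1 : M.dhat u α = some v) (h2 : M.dhat u' α = some v')
    (hne : v ≠ v') :
    v < v' ∧ M.Adj v v' := by
  induction α generalizing u u' with
  | nil =>
    simp only [WDFA.dhat] at h1 h2
    cases h1; cases h2
    exact ⟨hadj.1, hadj⟩
  | cons a w ih =>
    simp only [WDFA.dhat] at h1 h2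
    cases hpa : M.delta u a with
    | none => rw [hpa] at h1; simp at h1
    | some p =>
      cases hpa' : M.delta u' a with
      | none => rw [hpa'] at h2; simp at h2
      | some p' =>
        rw [hpa] at h1; rw [hpa'] at h2
        simp only [Option.bind_some] at h1 h2
        by_cases hpp : p = p'
        · subst hpp; rw [h1] at h2; exact absurd (Option.some.inj h2) hne
        · obtain ⟨_, hadj'⟩ := wdfa_adjacent_step M hreach u u' hadj a p p' hpa hpa' hpp
          exact ih p p' hadj' h1 h2
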